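/- With the setup of the local decoder: the unique rational solution Ψ to ∂Ψ = N·1_e (N = (q)_r) on K^r_{q+r} is given explicitly by Ψ_{Q'} = Σ_{i=0}^{t} (-1)^i binom(t,i) (q)_i (r-i)! where t = |e \ Q'|; in particular Ψ_{Q'} is an integer for every q-subset Q' of [q+r]. -/

import Mathlib

open Finset

private lemma count_between {α : Type*} [Fintype α] [DecidableEq α] (q r i : ℕ)
    (I Q : Finset α) (hIQ : I ⊆ Q) (hQ : Q.card = q) (hi : I.card = i) (hir : i ≤ r) :
    (univ.filter (fun e' : Finset α => e'.card = r ∧ I ⊆ e' ∧ e' ⊆ Q)).card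
      = (q - i).choose (r - i) := by
  have hcard : (Q \ I).card = q - i := by rw [card_sdiff_of_subset hIQ, hQ, hi]
  rw [← hcard, ← Finset.card_powersetCard (r - i) (Q \ I)]
  apply Finset.card_bij' (fun e' _ => e' \ I) (fun S _ => S ∪ I)
  · intro e' he'
    simp only [mem_filter, mem_univ, true_and] at he'
    rw [mem_powersetCard]
    exact ⟨sdiff_subset_sdiff he'.2.2 le_rfl,
      by rw [card_sdiff_of_subset he'.2.1, he'.1, hi]⟩
  · intro S hS
    rw [mem_powersetCard] at hS
    have hdisj : Disjoint S I := disjoint_sdiff_self_left.mono_left hS.1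
    simp only [mem_filter, mem_univ, true_and]
    refine ⟨?_, subset_union_right, union_subset (hS.1.trans sdiff_subset) hIQ⟩
    rw [card_union_of_disjoint hdisj, hS.2, hi]
    omega
  · intro e' he'
    simp only [mem_filter, mem_univ, true_and] at he'
    exact sdiff_union_of_subset he'.2.1
  · intro S hS
    rw [mem_powersetCard] at hS
    exact union_sdiff_cancel_right (disjoint_sdiff_self_left.mono_left hS.1)

private lemma desc_identity (q r i : ℕ) (hir : i ≤ r) (hrq : r ≤ q) :
    q.descFactorial r = (q - i).choose (r - i) * (q.descFactorial i * (r - i).factorial) := by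
  have c1 : q.choose r * r.choose i = q.choose i * (q - i).choose (r - i) :=
    Nat.choose_mul hir
  have c2 : r.choose i * i.factorial * (r - i).factorial = r.factorial :=
    Nat.choose_mul_factorial_mul_factorial hir
  rw [Nat.descFactorial_eq_factorial_mul_choose, Nat.descFactorial_eq_factorial_mul_choose, ← c2]
  calc r.choose i * i.factorial * (r - i).factorial * q.choose r
      = (q.choose r * r.choose i) * (i.factorial * (r - i).factorial) := by ring
    _ = (q.choose i * (q - i).choose (r - i)) * (i.factorial * (r - i).factorial) := by rw [c1]
    _ = (q - i).choose (r - i) * (i.factorial * q.choose i * (r - i).factorial) := by ring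

/-- the unique rational solution `Ψ` (supported on `q`-subsets of `[q+r]`)
of `∂Ψ = N·1_e` with `N = (q)_r` is given by the explicit integral formula
`Ψ_{Q'} = ∑_{i=0}^{t} (-1)^i C(t,i) (q)_i (r-i)!` with `t = |e \ Q'|`;
in particular every `Ψ_{Q'}` is an integer. -/
theorem stmt3 (q r : ℕ) (hqr : r < q) (hr : 1 ≤ r)
    (e : Finset (Fin (q + r))) (he : e.card = r)
    (Ψ : Finset (Fin (q + r)) → ℚ)
    (hsupp : ∀ Q : Finset (Fin (q + r)), Q.card ≠ q → Ψ Q = 0)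
    (hΨ : ∀ e' : Finset (Fin (q + r)), e'.card = r →
      ∑ Q ∈ univ.filter (fun Q : Finset (Fin (q + r)) => Q.card = q ∧ e' ⊆ Q), Ψ Q
        = if e' = e then (q.descFactorial r : ℚ) else 0) :
    ∀ Q' : Finset (Fin (q + r)), Q'.card = q →
      Ψ Q' = ((∑ i ∈ Finset.range (r + 1),
        (-1 : ℤ) ^ i * ((e \ Q').card.choose i : ℤ) * (q.descFactorial i : ℤ)
          * ((r - i).factorial : ℤ) : ℤ) : ℚ) := by
  have hrq : r ≤ q := hqr.le
  -- Step 1: generalized identity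
  have hg : ∀ I : Finset (Fin (q + r)), I.card ≤ r →
      ∑ Q ∈ univ.filter (fun Q : Finset (Fin (q + r)) => Q.card = q ∧ I ⊆ Q), Ψ Q
        = if I ⊆ e then ((q.descFactorial I.card * (r - I.card).factorial : ℕ) : ℚ) else 0 := by
    intro I hI
    set i := I.card with hi
    have h1 : ∑ e' ∈ univ.filter (fun e' : Finset (Fin (q + r)) => e'.card = r ∧ I ⊆ e'),
        ∑ Q ∈ univ.filter (fun Q : Finset (Fin (q + r)) => Q.card = q ∧ e' ⊆ Q), Ψ Q
        = if I ⊆ e then (q.descFactorial r : ℚ) else 0 := by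
      rw [Finset.sum_congr rfl
        (fun e' he' => hΨ e' (by simp only [mem_filter] at he'; exact he'.2.1))]
      rw [Finset.sum_ite_eq' _ e (fun _ => (q.descFactorial r : ℚ))]
      simp [mem_filter, he]
    have h2 : ∑ e' ∈ univ.filter (fun e' : Finset (Fin (q + r)) => e'.card = r ∧ I ⊆ e'),
        ∑ Q ∈ univ.filter (fun Q : Finset (Fin (q + r)) => Q.card = q ∧ e' ⊆ Q), Ψ Q
        = ((q - i).choose (r - i) : ℚ) *
          ∑ Q ∈ univ.filter (fun Q : Finset (Fin (q + r)) => Q.card = q ∧ I ⊆ Q), Ψ Q := by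
      rw [Finset.mul_sum]
      calc ∑ e' ∈ univ.filter (fun e' : Finset (Fin (q + r)) => e'.card = r ∧ I ⊆ e'),
            ∑ Q ∈ univ.filter (fun Q : Finset (Fin (q + r)) => Q.card = q ∧ e' ⊆ Q), Ψ Q
          = ∑ e' ∈ univ, ∑ Q ∈ univ, if (e'.card = r ∧ I ⊆ e') ∧ (Q.card = q ∧ e' ⊆ Q)
              then Ψ Q else 0 := by
            rw [Finset.sum_filter]
            refine Finset.sum_congr rfl fun e' _ => ?_
            split_ifs with h
            · rw [Finset.sum_filter]
              refine Finset.sum_congr rfl fun Q _ => ?_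
              simp [h]
            · simp [h]
        _ = ∑ Q ∈ univ, ∑ e' ∈ univ, if (e'.card = r ∧ I ⊆ e') ∧ (Q.card = q ∧ e' ⊆ Q)
              then Ψ Q else 0 := Finset.sum_comm
        _ = ∑ Q ∈ univ.filter (fun Q : Finset (Fin (q + r)) => Q.card = q ∧ I ⊆ Q),
              ((q - i).choose (r - i) : ℚ) * Ψ Q := by
            rw [Finset.sum_filter]
            refine Finset.sum_congr rfl fun Q _ => ?_
            rw [← Finset.sum_filter]
            split_ifs with h
            · have hset : univ.filter (fun e' : Finset (Fin (q + r)) =>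
                  (e'.card = r ∧ I ⊆ e') ∧ (Q.card = q ∧ e' ⊆ Q))
                  = univ.filter (fun e' : Finset (Fin (q + r)) =>
                    e'.card = r ∧ I ⊆ e' ∧ e' ⊆ Q) := by
                ext e'
                simp only [mem_filter, mem_univ, true_and]
                tauto
              rw [hset, Finset.sum_const, count_between q r i I Q h.2 h.1 hi.symm hI,
                nsmul_eq_mul]
            · have hset : univ.filter (fun e' : Finset (Fin (q + r)) =>
                  (e'.card = r ∧ I ⊆ e') ∧ (Q.card = q ∧ e' ⊆ Q)) = ∅ := by
                ext e'
                simp only [mem_filter, mem_univ, true_and, notMem_empty, iff_false]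
                rintro ⟨⟨_, hIe⟩, hQq, heQ⟩
                exact h ⟨hQq, hIe.trans heQ⟩
              rw [hset, Finset.sum_empty]
    have hc : ((q - i).choose (r - i) : ℚ) ≠ 0 := by
      exact_mod_cast (Nat.choose_pos (Nat.sub_le_sub_right hrq i)).ne'
    have hkey := desc_identity q r i hI hrq
    apply mul_left_cancel₀ hc
    rw [← h2, h1]
    split_ifs with h
    · rw [hkey]; push_cast; ring
    · simp
  -- Step 2: inclusion-exclusion recovery of Ψ
  intro Q' hQ'
  have hQc : Q'ᶜ.card = r := by
    rw [card_compl, hQ', Fintype.card_fin]; omega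
  have hdrop : ∀ S : Finset (Fin (q + r)),
      ∑ Q ∈ univ.filter (fun Q : Finset (Fin (q + r)) => Q.card = q ∧ S ⊆ Q), Ψ Q
        = ∑ Q ∈ univ.filter (fun Q : Finset (Fin (q + r)) => S ⊆ Q), Ψ Q := by
    intro S
    apply Finset.sum_subset
    · intro Q hQ
      simp only [mem_filter] at *
      exact ⟨hQ.1, hQ.2.2⟩
    · intro Q hQ hnot
      apply hsupp
      intro hcard
      apply hnot
      simp only [mem_filter, mem_univ, true_and] at *
      exact ⟨hcard, hQ⟩
  have hIE : Ψ Q' = ∑ S ∈ Q'ᶜ.powerset,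
      (-1 : ℚ) ^ S.card *
        ∑ Q ∈ univ.filter (fun Q : Finset (Fin (q + r)) => Q.card = q ∧ S ⊆ Q), Ψ Q := by
    simp only [hdrop]
    symm
    calc ∑ S ∈ Q'ᶜ.powerset,
          (-1 : ℚ) ^ S.card * ∑ Q ∈ univ.filter (fun Q : Finset (Fin (q + r)) => S ⊆ Q), Ψ Q
        = ∑ S ∈ Q'ᶜ.powerset, ∑ Q ∈ univ,
            (if S ⊆ Q then (-1 : ℚ) ^ S.card * Ψ Q else 0) := by
          refine Finset.sum_congr rfl fun S _ => ?_
          rw [Finset.sum_filter, Finset.mul_sum]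
          refine Finset.sum_congr rfl fun Q _ => ?_
          split_ifs <;> simp
      _ = ∑ Q ∈ univ, ∑ S ∈ Q'ᶜ.powerset,
            (if S ⊆ Q then (-1 : ℚ) ^ S.card * Ψ Q else 0) := Finset.sum_comm
      _ = ∑ Q ∈ univ, (if Q'ᶜ ∩ Q = ∅ then (1 : ℚ) else 0) * Ψ Q := by
          refine Finset.sum_congr rfl fun Q _ => ?_
          rw [← Finset.sum_filter]
          have hps : Q'ᶜ.powerset.filter (fun S => S ⊆ Q) = (Q'ᶜ ∩ Q).powerset := by
            ext S
            simp only [mem_filter, mem_powerset, subset_inter_iff]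
          rw [hps, ← Finset.sum_mul]
          congr 1
          have hz := Finset.sum_powerset_neg_one_pow_card (x := Q'ᶜ ∩ Q)
          calc ∑ S ∈ (Q'ᶜ ∩ Q).powerset, (-1 : ℚ) ^ S.card
              = ((∑ S ∈ (Q'ᶜ ∩ Q).powerset, (-1 : ℤ) ^ S.card : ℤ) : ℚ) := by push_cast; rfl
            _ = _ := by rw [hz]; split_ifs <;> simp
      _ = Ψ Q' := by
          refine (Finset.sum_congr rfl fun Q _ => ?_).trans
            ((Finset.sum_ite_eq' univ Q' Ψ).trans (by simp))
          by_cases hq : Q = Q'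
          · have hie : Q'ᶜ ∩ Q = ∅ := by rw [hq]; ext x; simp
            rw [if_pos hie, if_pos hq, one_mul]
          · rw [if_neg hq]
            by_cases hsub : Q'ᶜ ∩ Q = ∅
            · have hQQ' : Q ⊆ Q' := by
                intro x hx
                by_contra hx'
                exact (Finset.eq_empty_iff_forall_notMem.1 hsub) x
                  (mem_inter.2 ⟨mem_compl.2 hx', hx⟩)
              have hlt : Q.card < Q'.card := card_lt_card (lt_of_le_of_ne hQQ' hq)
              rw [hsupp Q (by omega)]
              ring
            · simp [hsub]
  -- Step 3: evaluate
  rw [hIE,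
    Finset.sum_congr rfl (fun S hS => by
      rw [hg S (by have := card_le_card (mem_powerset.1 hS); omega)])]
  have hsplit : Q'ᶜ ∩ e = e \ Q' := by
    ext x; simp [mem_inter, mem_compl, mem_sdiff, and_comm]
  have ht : (e \ Q').card ≤ r := by
    have := card_le_card (sdiff_subset (s := e) (t := Q')); omega
  calc ∑ S ∈ Q'ᶜ.powerset, (-1 : ℚ) ^ S.card *
        (if S ⊆ e then ((q.descFactorial S.card * (r - S.card).factorial : ℕ) : ℚ) else 0)
      = ∑ S ∈ (e \ Q').powerset,
          (-1 : ℚ) ^ S.card * ((q.descFactorial S.card * (r - S.card).factorial : ℕ) : ℚ) := by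
        have hps2 : Q'ᶜ.powerset.filter (fun S => S ⊆ e) = (e \ Q').powerset := by
          ext S
          simp only [mem_filter, mem_powerset, ← hsplit, subset_inter_iff]
        rw [← hps2, Finset.sum_filter]
        refine Finset.sum_congr rfl fun S _ => ?_
        split_ifs <;> simp
    _ = ∑ m ∈ Finset.range ((e \ Q').card + 1), (e \ Q').card.choose m •
          ((-1 : ℚ) ^ m * ((q.descFactorial m * (r - m).factorial : ℕ) : ℚ)) :=
        Finset.sum_powerset_apply_card
          (fun m => (-1 : ℚ) ^ m * ((q.descFactorial m * (r - m).factorial : ℕ) : ℚ))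
    _ = ((∑ i ∈ Finset.range (r + 1),
        (-1 : ℤ) ^ i * ((e \ Q').card.choose i : ℤ) * (q.descFactorial i : ℤ)
          * ((r - i).factorial : ℤ) : ℤ) : ℚ) := by
        push_cast
        rw [Finset.sum_subset (Finset.range_subset_range.2 (by omega : (e \ Q').card + 1 ≤ r + 1))]
        · refine Finset.sum_congr rfl fun m _ => ?_
          ring
        · intro m _ hm
          rw [mem_range, not_lt] at hm
          rw [Nat.choose_eq_zero_of_lt (by omega)]
          ring
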